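/- Let W be an integrable real-valued random variable whose cumulative distribution function is continuous, let α ∈ (0,1), and let W*_α ∈ ℝ satisfy P(W ≤ W*_α) = α. Then (1/α)·E[W·𝟙_{W ≤ W*_α}] = sup_{c ∈ ℝ} { c + (1/α)·E[min(W − c, 0)] }, and the supremum is attained at c = W*_α. That is, the Expected Shortfall at level α, defined as the mean of the worst α-fraction of outcomes, equals the Rockafellar–Uryasev variational expression. -/

import Mathlib

open MeasureTheory ProbabilityTheory

/-- Measurable version of the main theorem. -/
lemma es_ru_aux
    {Ω : Type*} [MeasureSpace Ω] [IsProbabilityMeasure (ℙ : Measure Ω)]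
    (W : Ω → ℝ) (hW : Integrable W) (hm : Measurable W)
    {α : ℝ} (hα0 : 0 < α) (Wstar : ℝ)
    (hVaR : (ℙ {ω | W ω ≤ Wstar}).toReal = α) :
    ((1 / α) * ∫ ω, Set.indicator {ω | W ω ≤ Wstar} W ω) =
        (⨆ c : ℝ, (c + (1 / α) * ∫ ω, min (W ω - c) 0)) ∧
      (∀ c : ℝ,
        c + (1 / α) * ∫ ω, min (W ω - c) 0 ≤
          Wstar + (1 / α) * ∫ ω, min (W ω - Wstar) 0) := by
  set s : Set Ω := {ω | W ω ≤ Wstar} with hs_def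
  have hs : MeasurableSet s := measurableSet_le hm measurable_const
  have hint : ∀ c : ℝ, Integrable (fun ω => min (W ω - c) 0) := fun c =>
    ⟨((hm.sub measurable_const).min measurable_const).aestronglyMeasurable,
      ((hW.sub (integrable_const c)).hasFiniteIntegral).min_zero⟩
  -- key equality at Wstar
  have hkey : (∫ ω, Set.indicator s W ω) = (∫ ω, min (W ω - Wstar) 0) + Wstar * α := by
    have hpt : ∀ ω, Set.indicator s W ω
        = min (W ω - Wstar) 0 + Set.indicator s (fun _ => Wstar) ω := by
      intro ω
      by_cases h : ω ∈ s
      · simp only [Set.indicator_of_mem h]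
        have : W ω ≤ Wstar := h
        rw [min_eq_left (by linarith)]; ring
      · simp only [Set.indicator_of_notMem h]
        have h1 : Wstar < W ω := not_le.mp h
        rw [min_eq_right (by linarith)]
        simp
    have h2 : (∫ ω, Set.indicator s W ω)
        = (∫ ω, min (W ω - Wstar) 0) + ∫ ω, Set.indicator s (fun _ => Wstar) ω := by
      rw [← integral_add (hint Wstar) ((integrable_const Wstar).indicator hs)]
      exact integral_congr_ae (Filter.Eventually.of_forall hpt)
    rw [h2, integral_indicator_const _ hs, smul_eq_mul, measureReal_def, hVaR]; ring
  -- the inequality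
  have hle : ∀ c : ℝ, c + (1 / α) * ∫ ω, min (W ω - c) 0 ≤
      Wstar + (1 / α) * ∫ ω, min (W ω - Wstar) 0 := by
    intro c
    have hpt : ∀ ω, min (W ω - c) 0
        ≤ min (W ω - Wstar) 0 + Set.indicator s (fun _ => Wstar - c) ω := by
      intro ω
      by_cases h : ω ∈ s
      · have h1 : W ω ≤ Wstar := h
        simp only [Set.indicator_of_mem h]
        rcases le_or_gt (W ω) c with h2 | h2
        · rw [min_eq_left (by linarith), min_eq_left (by linarith)]; ring_nf; linarith
        · rw [min_eq_right (by linarith), min_eq_left (by linarith)]; linarith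
      · have h1 : Wstar < W ω := not_le.mp h
        simp only [Set.indicator_of_notMem h]
        have h2 : min (W ω - Wstar) 0 = 0 := min_eq_right (by linarith)
        have h3 : min (W ω - c) 0 ≤ 0 := min_le_right _ _
        linarith
    have hI : (∫ ω, min (W ω - c) 0)
        ≤ (∫ ω, min (W ω - Wstar) 0) + (Wstar - c) * α := by
      calc (∫ ω, min (W ω - c) 0)
          ≤ ∫ ω, (min (W ω - Wstar) 0 + Set.indicator s (fun _ => Wstar - c) ω) :=
            integral_mono (hint c)
              ((hint Wstar).add ((integrable_const _).indicator hs)) hpt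
        _ = (∫ ω, min (W ω - Wstar) 0) + (Wstar - c) * α := by
            rw [integral_add (hint Wstar) ((integrable_const _).indicator hs),
              integral_indicator_const _ hs, smul_eq_mul, measureReal_def, hVaR]; ring
    have hα' : 0 < 1 / α := by positivity
    have h4 := mul_le_mul_of_nonneg_left hI hα'.le
    rw [mul_add] at h4
    have h5 : 1 / α * ((Wstar - c) * α) = Wstar - c := by field_simp
    linarith
  have hES : ((1 / α) * ∫ ω, Set.indicator s W ω)
      = Wstar + (1 / α) * ∫ ω, min (W ω - Wstar) 0 := by
    rw [hkey]; field_simp; ring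
  refine ⟨?_, hle⟩
  rw [hES]
  have hbdd : BddAbove (Set.range fun c : ℝ => c + (1 / α) * ∫ ω, min (W ω - c) 0) := by
    refine ⟨Wstar + (1 / α) * ∫ ω, min (W ω - Wstar) 0, ?_⟩
    rintro _ ⟨c, rfl⟩; exact hle c
  exact le_antisymm (le_ciSup hbdd Wstar) (ciSup_le hle)

/-- For an integrable real random variable `W` with continuous distribution function,
`α ∈ (0,1)`, and Value at Risk `W*` with `P(W ≤ W*) = α`, the Expected Shortfall
`(1/α)·E[W·𝟙_{W ≤ W*}]` (mean of the worst `α`-fraction of outcomes) equals the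
Rockafellar–Uryasev variational expression
`sup_c { c + (1/α)·E[min(W − c, 0)] }`, and the supremum is attained at `c = W*`. -/
theorem expectedShortfall_eq_rockafellarUryasev
    {Ω : Type*} [MeasureSpace Ω] [IsProbabilityMeasure (ℙ : Measure Ω)]
    (W : Ω → ℝ) (hW : Integrable W)
    (hcdf : Continuous fun c : ℝ => (ℙ {ω | W ω ≤ c}).toReal)
    {α : ℝ} (hα : α ∈ Set.Ioo (0 : ℝ) 1) (Wstar : ℝ)
    (hVaR : (ℙ {ω | W ω ≤ Wstar}).toReal = α) :
    ((1 / α) * ∫ ω, Set.indicator {ω | W ω ≤ Wstar} W ω) =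
        (⨆ c : ℝ, (c + (1 / α) * ∫ ω, min (W ω - c) 0)) ∧
      (∀ c : ℝ,
        c + (1 / α) * ∫ ω, min (W ω - c) 0 ≤
          Wstar + (1 / α) * ∫ ω, min (W ω - Wstar) 0) := by
  -- replace W by a measurable representative
  set W' := hW.aestronglyMeasurable.mk W with hW'def
  have hae : W =ᵐ[ℙ] W' := hW.aestronglyMeasurable.ae_eq_mk
  have hm : Measurable W' := hW.aestronglyMeasurable.measurable_mk
  have hW'int : Integrable W' := hW.congr hae
  have hsets : ∀ c : ℝ, ℙ {ω | W ω ≤ c} = ℙ {ω | W' ω ≤ c} := by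
    intro c
    apply measure_congr
    filter_upwards [hae] with ω h
    change (W ω ≤ c) = (W' ω ≤ c)
    rw [h]
  have hind : (∫ ω, Set.indicator {ω | W ω ≤ Wstar} W ω)
      = ∫ ω, Set.indicator {ω | W' ω ≤ Wstar} W' ω := by
    apply integral_congr_ae
    filter_upwards [hae] with ω h
    simp [Set.indicator, Set.mem_setOf_eq, h]
  have hmin : ∀ c : ℝ, (∫ ω, min (W ω - c) 0) = ∫ ω, min (W' ω - c) 0 := by
    intro c
    apply integral_congr_ae
    filter_upwards [hae] with ω h
    rw [h]
  have hVaR' : (ℙ {ω | W' ω ≤ Wstar}).toReal = α := by rw [← hsets]; exact hVaR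
  obtain ⟨h1, h2⟩ := es_ru_aux W' hW'int hm hα.1 Wstar hVaR'
  constructor
  · rw [hind]
    rw [h1]
    congr 1
    ext c
    rw [hmin c]
  · intro c
    rw [hmin c, hmin Wstar]
    exact h2 c
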